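/- Let p > 1 and δ ≥ 0, and define A(a) = (δ+|a|)^{p-2} a and F(a) = (δ+|a|)^{(p-2)/2} a for a ∈ ℝ^d. Then there exist constants c, C > 0 depending only on p such that for all a, b ∈ ℝ^d: c·|F(a) − F(b)|² ≤ (A(a) − A(b))·(a − b) ≤ C·|F(a) − F(b)|². -/

import Mathlib

open Real

lemma sq_rpow_half (x e : ℝ) (hx : 0 ≤ x) : (x ^ (e/2)) ^ 2 = x ^ e := by
  rcases hx.lt_or_eq with h | h
  · rw [sq, ← Real.rpow_add h]; ring_nf
  · rcases eq_or_ne e 0 with he | he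
    · simp [← h, he]
    · rw [← h, Real.zero_rpow he, Real.zero_rpow (by positivity : e/2 ≠ 0)]
      norm_num

-- Bernoulli convex: x^m - y^m ≤ m x^(m-1) (x-y) for 0 ≤ y ≤ x, 1 ≤ m
lemma bern1 {x y m : ℝ} (hy : 0 ≤ y) (hxy : y ≤ x) (hm : 1 ≤ m) :
    x ^ m - y ^ m ≤ m * x ^ (m - 1) * (x - y) := by
  rcases (hy.trans hxy).lt_or_eq with hx | hx
  · have hs : -1 ≤ y / x - 1 := by
      have : 0 ≤ y / x := div_nonneg hy hx.le
      linarith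
    have hb := one_add_mul_self_le_rpow_one_add hs hm
    rw [add_sub_cancel] at hb
    have hdiv : (y / x) ^ m = y ^ m / x ^ m := Real.div_rpow hy hx.le m
    rw [hdiv] at hb
    have hxm : (0:ℝ) < x ^ m := Real.rpow_pos_of_pos hx m
    have hx1 : x ^ (m - 1) = x ^ m / x := by
      rw [Real.rpow_sub hx, Real.rpow_one]
    rw [hx1]
    have h2 : (1 + m * (y / x - 1)) * x ^ m ≤ y ^ m := by
      calc (1 + m * (y / x - 1)) * x ^ m ≤ (y ^ m / x ^ m) * x ^ m :=
            mul_le_mul_of_nonneg_right hb hxm.le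
        _ = y ^ m := by field_simp
    have : (1 + m * (y / x - 1)) * x ^ m = x ^ m - m * (x ^ m / x) * (x - y) := by
      field_simp; ring
    linarith [this ▸ h2]
  · have : y = 0 := le_antisymm (hx ▸ hxy) hy
    subst this
    have : x = 0 := hx.symm
    subst this
    simp [Real.zero_rpow (by linarith : m ≠ 0)]

-- Bernoulli concave: x^n - y^n ≤ n y^(n-1) (x-y) for 0 < y ≤ x, 0 ≤ n ≤ 1
lemma bern2 {x y n : ℝ} (hy : 0 < y) (hxy : y ≤ x) (hn0 : 0 ≤ n) (hn1 : n ≤ 1) :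
    x ^ n - y ^ n ≤ n * y ^ (n - 1) * (x - y) := by
  have hs : -1 ≤ x / y - 1 := by
    have : 0 ≤ x / y := div_nonneg (hy.le.trans hxy) hy.le
    linarith
  have hb := rpow_one_add_le_one_add_mul_self hs hn0 hn1
  rw [add_sub_cancel] at hb
  have hdiv : (x / y) ^ n = x ^ n / y ^ n := Real.div_rpow (hy.le.trans hxy) hy.le n
  rw [hdiv] at hb
  have hym : (0:ℝ) < y ^ n := Real.rpow_pos_of_pos hy n
  have hy1 : y ^ (n - 1) = y ^ n / y := by rw [Real.rpow_sub hy, Real.rpow_one]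
  rw [hy1]
  have h2 : x ^ n ≤ (1 + n * (x / y - 1)) * y ^ n := by
    calc x ^ n = (x ^ n / y ^ n) * y ^ n := by field_simp
      _ ≤ (1 + n * (x / y - 1)) * y ^ n := mul_le_mul_of_nonneg_right hb hym.le
  have : (1 + n * (x / y - 1)) * y ^ n = y ^ n + n * (y ^ n / y) * (x - y) := by
    field_simp
  linarith [this ▸ h2]

lemma lemL {m δ t r : ℝ} (hm : -1 < m) (hδ : 0 ≤ δ) (hr : 0 ≤ r) (htr : r ≤ t) :
    min 1 (1+m) * ((δ+t) ^ m * (t-r)) ≤ (δ+t) ^ m * t - (δ+r) ^ m * r ∧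
    (δ+t) ^ m * t - (δ+r) ^ m * r ≤ max 1 (1+m) * ((δ+t) ^ m * (t-r)) := by
  have ht : 0 ≤ t := hr.trans htr
  have hx : 0 ≤ δ + t := by linarith
  have hy : 0 ≤ δ + r := by linarith
  have hxm : 0 ≤ (δ+t) ^ m := Real.rpow_nonneg hx m
  have hym : 0 ≤ (δ+r) ^ m := Real.rpow_nonneg hy m
  have hP : 0 ≤ (δ+t) ^ m * (t-r) := mul_nonneg hxm (by linarith)
  rcases le_or_gt 0 m with hm0 | hm0
  · -- m ≥ 0
    have hmono : (δ+r) ^ m ≤ (δ+t) ^ m := Real.rpow_le_rpow hy (by linarith) hm0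
    have hmin : min 1 (1+m) = 1 := min_eq_left (by linarith)
    have hmax : max 1 (1+m) = 1 + m := max_eq_right (by linarith)
    constructor
    · rw [hmin]
      nlinarith [mul_le_mul_of_nonneg_right hmono hr]
    · rw [hmax]
      have key : r * ((δ+t) ^ m - (δ+r) ^ m) ≤ m * (δ+t) ^ m * (t-r) := by
        rcases le_or_gt m 1 with hm1 | hm1
        · rcases hy.lt_or_eq with hy' | hy'
          · have hb := bern2 hy' (by linarith : δ + r ≤ δ + t) hm0 hm1
            have hsub : (δ+r) ^ (m-1) = (δ+r) ^ m / (δ+r) := by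
              rw [Real.rpow_sub hy', Real.rpow_one]
            rw [hsub] at hb
            have h1 : r * ((δ+t) ^ m - (δ+r) ^ m) ≤ r * (m * ((δ+r) ^ m / (δ+r)) * (t - r)) := by
              have he : δ + t - (δ + r) = t - r := by ring
              rw [he] at hb
              exact mul_le_mul_of_nonneg_left hb hr
            have h2 : r * (m * ((δ+r) ^ m / (δ+r)) * (t - r)) ≤ m * (δ+t) ^ m * (t-r) := by
              have e1 : r * (m * ((δ+r) ^ m / (δ+r)) * (t - r))
                  = (r / (δ+r)) * (m * (δ+r) ^ m * (t-r)) := by ring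
              rw [e1]
              have hfr : r / (δ+r) ≤ 1 := div_le_one_of_le₀ (by linarith) hy'.le
              have hfr0 : 0 ≤ r / (δ+r) := div_nonneg hr hy'.le
              have hq : 0 ≤ m * (δ+r) ^ m * (t-r) := by
                apply mul_nonneg (mul_nonneg hm0 hym); linarith
              nlinarith [mul_le_mul_of_nonneg_right hmono (mul_nonneg hm0 (by linarith : (0:ℝ) ≤ t - r))]
            linarith
          · have hr0 : r = 0 := by linarith
            rw [hr0]
            simp
            positivity
        · have hb := bern1 hy (by linarith : δ + r ≤ δ + t) hm1.le
          rcases hx.lt_or_eq with hx' | hx'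
          · have hsub : (δ+t) ^ (m-1) = (δ+t) ^ m / (δ+t) := by
              rw [Real.rpow_sub hx', Real.rpow_one]
            rw [hsub] at hb
            have he : δ + t - (δ + r) = t - r := by ring
            rw [he] at hb
            have h1 : r * ((δ+t) ^ m - (δ+r) ^ m) ≤ r * (m * ((δ+t) ^ m / (δ+t)) * (t - r)) :=
              mul_le_mul_of_nonneg_left hb hr
            have h2 : r * (m * ((δ+t) ^ m / (δ+t)) * (t - r)) ≤ m * (δ+t) ^ m * (t-r) := by
              have e1 : r * (m * ((δ+t) ^ m / (δ+t)) * (t - r))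
                  = (r / (δ+t)) * (m * (δ+t) ^ m * (t-r)) := by ring
              rw [e1]
              have hfr : r / (δ+t) ≤ 1 := div_le_one_of_le₀ (by linarith) hx'.le
              have hfr0 : 0 ≤ r / (δ+t) := div_nonneg hr hx'.le
              have hq : 0 ≤ m * (δ+t) ^ m * (t-r) := by
                apply mul_nonneg (mul_nonneg (by linarith) hxm); linarith
              nlinarith
            linarith
          · have ht0 : t = 0 := by linarith
            have hr0 : r = 0 := by linarith
            rw [ht0, hr0]
            simp
      nlinarith [key]
  · -- -1 < m < 0
    have hmin : min 1 (1+m) = 1 + m := min_eq_right (by linarith)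
    have hmax : max 1 (1+m) = 1 := max_eq_left (by linarith)
    rcases hy.lt_or_eq with hy' | hy'
    · have hx' : 0 < δ + t := by linarith
      have hmono : (δ+t) ^ m ≤ (δ+r) ^ m :=
        Real.rpow_le_rpow_of_nonpos hy' (by linarith) hm0.le
      have hn0 : 0 < -m := by linarith
      have hn1 : -m < 1 := by linarith
      have hb := bern2 hy' (by linarith : δ + r ≤ δ + t) hn0.le hn1.le
      have hxn : 0 < (δ+t) ^ (-m) := Real.rpow_pos_of_pos hx' _
      have hyn : 0 < (δ+r) ^ (-m) := Real.rpow_pos_of_pos hy' _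
      have hxmn : (δ+t) ^ m = ((δ+t) ^ (-m))⁻¹ := by
        rw [← Real.rpow_neg hx'.le, neg_neg]
      have hymn : (δ+r) ^ m = ((δ+r) ^ (-m))⁻¹ := by
        rw [← Real.rpow_neg hy'.le, neg_neg]
      have hsub : (δ+r) ^ (-m-1) = (δ+r) ^ (-m) / (δ+r) := by
        rw [Real.rpow_sub hy', Real.rpow_one]
      rw [hsub, (by ring : δ + t - (δ + r) = t - r)] at hb
      -- g1 : r * (X - Y) ≤ (-m) * Y * (t - r)  with X = (δ+t)^(-m), Y = (δ+r)^(-m)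
      have g1 : r * ((δ+t) ^ (-m) - (δ+r) ^ (-m)) ≤ (-m) * (δ+r) ^ (-m) * (t - r) := by
        have h1 := mul_le_mul_of_nonneg_left hb hr
        have e1 : r * ((-m) * ((δ+r) ^ (-m) / (δ+r)) * (t - r))
            = (r / (δ+r)) * ((-m) * (δ+r) ^ (-m) * (t-r)) := by ring
        rw [e1] at h1
        have hfr : r / (δ+r) ≤ 1 := div_le_one_of_le₀ (by linarith) hy'.le
        have hfr0 : 0 ≤ r / (δ+r) := div_nonneg hr hy'.le
        have hq : 0 ≤ (-m) * (δ+r) ^ (-m) * (t-r) := by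
          apply mul_nonneg (mul_nonneg hn0.le hyn.le); linarith
        nlinarith
      have key : r * ((δ+r) ^ m - (δ+t) ^ m) ≤ (-m) * (δ+t) ^ m * (t - r) := by
        rw [hxmn, hymn]
        have e2 : r * (((δ+r) ^ (-m))⁻¹ - ((δ+t) ^ (-m))⁻¹)
            = r * ((δ+t) ^ (-m) - (δ+r) ^ (-m)) / ((δ+t) ^ (-m) * (δ+r) ^ (-m)) := by
          field_simp
        have e3 : (-m) * ((δ+t) ^ (-m))⁻¹ * (t - r)
            = (-m) * (δ+r) ^ (-m) * (t - r) / ((δ+t) ^ (-m) * (δ+r) ^ (-m)) := by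
          field_simp
        rw [e2, e3]
        gcongr
      constructor
      · rw [hmin]; linarith [key]
      · rw [hmax]
        linarith [mul_le_mul_of_nonneg_right hmono hr]
    · have hr0 : r = 0 := by linarith
      have hδ0 : δ = 0 := by linarith
      subst hδ0
      rw [hr0]
      simp only [add_zero, zero_add, mul_zero, sub_zero]
      constructor
      · rw [hmin]; nlinarith [mul_nonneg (Real.rpow_nonneg ht m) ht]
      · rw [hmax]; nlinarith [mul_nonneg (Real.rpow_nonneg ht m) ht]

lemma div_sq_cancel' {b : ℝ} (hb : b ≠ 0) (a X : ℝ) : a / b^2 * (b^2 * X) = a * X := by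
  field_simp

-- E1 : endpoint s = tr
lemma scalarE1 {p δ t r : ℝ} (hp : 1 < p) (hδ : 0 ≤ δ) (hr : 0 ≤ r) (htr : r ≤ t) :
    min 1 (p-1) / (max 1 (p/2))^2
        * ((δ+t) ^ ((p-2)/2) * t - (δ+r) ^ ((p-2)/2) * r)^2
      ≤ (t-r) * ((δ+t) ^ (p-2) * t - (δ+r) ^ (p-2) * r) ∧
    (t-r) * ((δ+t) ^ (p-2) * t - (δ+r) ^ (p-2) * r)
      ≤ max 1 (p-1) / (min 1 (p/2))^2
        * ((δ+t) ^ ((p-2)/2) * t - (δ+r) ^ ((p-2)/2) * r)^2 := by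
  have ht : 0 ≤ t := hr.trans htr
  have hx : 0 ≤ δ + t := by linarith
  obtain ⟨hA1, hA2⟩ := lemL (by linarith : (-1:ℝ) < p - 2) hδ hr htr
  obtain ⟨hB1, hB2⟩ := lemL (by linarith : (-1:ℝ) < (p-2)/2) hδ hr htr
  rw [show (1 : ℝ) + (p - 2) = p - 1 by ring] at hA1 hA2
  rw [show (1 : ℝ) + (p - 2)/2 = p/2 by ring] at hB1 hB2
  set F := (δ+t) ^ ((p-2)/2) * t - (δ+r) ^ ((p-2)/2) * r with hF
  set Q := (δ+t) ^ ((p-2)/2) * (t-r) with hQ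
  have hQ0 : 0 ≤ Q := mul_nonneg (Real.rpow_nonneg hx _) (by linarith)
  have hcb : (0:ℝ) < min 1 (p/2) := by
    apply lt_min one_pos; linarith
  have hCb : (1:ℝ) ≤ max 1 (p/2) := le_max_left _ _
  have hca : (0:ℝ) < min 1 (p-1) := by
    apply lt_min one_pos; linarith
  have hCa : (1:ℝ) ≤ max 1 (p-1) := le_max_left _ _
  have hF0 : 0 ≤ F := le_trans (by positivity) hB1
  have hQsq : ((δ+t) ^ ((p-2)/2))^2 = (δ+t)^(p-2) := sq_rpow_half _ _ hx
  have hFup : F^2 ≤ (max 1 (p/2))^2 * ((δ+t)^(p-2) * (t-r)^2) := by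
    have h1 : F ≤ max 1 (p/2) * Q := hB2
    have := mul_self_le_mul_self hF0 h1
    calc F^2 = F * F := sq F
      _ ≤ (max 1 (p/2) * Q) * (max 1 (p/2) * Q) := this
      _ = (max 1 (p/2))^2 * (((δ+t) ^ ((p-2)/2))^2 * (t-r)^2) := by rw [hQ]; ring
      _ = (max 1 (p/2))^2 * ((δ+t)^(p-2) * (t-r)^2) := by rw [hQsq]
  have hFdown : (min 1 (p/2))^2 * ((δ+t)^(p-2) * (t-r)^2) ≤ F^2 := by
    have h1 : min 1 (p/2) * Q ≤ F := hB1
    have h0 : 0 ≤ min 1 (p/2) * Q := by positivity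
    have := mul_self_le_mul_self h0 h1
    calc (min 1 (p/2))^2 * ((δ+t)^(p-2) * (t-r)^2)
        = (min 1 (p/2))^2 * (((δ+t) ^ ((p-2)/2))^2 * (t-r)^2) := by rw [hQsq]
      _ = (min 1 (p/2) * Q) * (min 1 (p/2) * Q) := by rw [hQ]; ring
      _ ≤ F * F := this
      _ = F^2 := (sq F).symm
  -- linear-in-(t-r) bounds
  have hGdown : min 1 (p-1) * ((δ+t)^(p-2) * (t-r)^2)
      ≤ (t-r) * ((δ+t) ^ (p-2) * t - (δ+r) ^ (p-2) * r) := by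
    have := mul_le_mul_of_nonneg_left hA1 (by linarith : (0:ℝ) ≤ t - r)
    nlinarith [this]
  have hGup : (t-r) * ((δ+t) ^ (p-2) * t - (δ+r) ^ (p-2) * r)
      ≤ max 1 (p-1) * ((δ+t)^(p-2) * (t-r)^2) := by
    have := mul_le_mul_of_nonneg_left hA2 (by linarith : (0:ℝ) ≤ t - r)
    nlinarith [this]
  constructor
  · have h1 : min 1 (p-1) / (max 1 (p/2))^2 * F^2
        ≤ min 1 (p-1) / (max 1 (p/2))^2 * ((max 1 (p/2))^2 * ((δ+t)^(p-2) * (t-r)^2)) := by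
      apply mul_le_mul_of_nonneg_left hFup
      positivity
    have h2 : min 1 (p-1) / (max 1 (p/2))^2 * ((max 1 (p/2))^2 * ((δ+t)^(p-2) * (t-r)^2))
        = min 1 (p-1) * ((δ+t)^(p-2) * (t-r)^2) :=
      div_sq_cancel' (by positivity) _ _
    linarith
  · have h1 : max 1 (p-1) * ((δ+t)^(p-2) * (t-r)^2)
        = max 1 (p-1) / (min 1 (p/2))^2 * ((min 1 (p/2))^2 * ((δ+t)^(p-2) * (t-r)^2)) :=
      (div_sq_cancel' hcb.ne' _ _).symm
    have h2 : max 1 (p-1) / (min 1 (p/2))^2 * ((min 1 (p/2))^2 * ((δ+t)^(p-2) * (t-r)^2))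
        ≤ max 1 (p-1) / (min 1 (p/2))^2 * F^2 := by
      apply mul_le_mul_of_nonneg_left hFdown
      positivity
    linarith

-- E2 : endpoint s = -tr
lemma scalarE2 {p δ t r : ℝ} (hp : 1 < p) (hδ : 0 ≤ δ) (hr : 0 ≤ r) (htr : r ≤ t) :
    (1/4 : ℝ) * ((δ+t) ^ ((p-2)/2) * t + (δ+r) ^ ((p-2)/2) * r)^2
      ≤ (t+r) * ((δ+t) ^ (p-2) * t + (δ+r) ^ (p-2) * r) ∧
    (t+r) * ((δ+t) ^ (p-2) * t + (δ+r) ^ (p-2) * r)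
      ≤ 4 * ((δ+t) ^ ((p-2)/2) * t + (δ+r) ^ ((p-2)/2) * r)^2 := by
  have ht : 0 ≤ t := hr.trans htr
  have hx : 0 ≤ δ + t := by linarith
  have hy : 0 ≤ δ + r := by linarith
  have hft : 0 ≤ (δ+t) ^ ((p-2)/2) * t := mul_nonneg (Real.rpow_nonneg hx _) ht
  have hfr : 0 ≤ (δ+r) ^ ((p-2)/2) * r := mul_nonneg (Real.rpow_nonneg hy _) hr
  have hgt : 0 ≤ (δ+t) ^ (p-2) * t := mul_nonneg (Real.rpow_nonneg hx _) ht
  have hgr : 0 ≤ (δ+r) ^ (p-2) * r := mul_nonneg (Real.rpow_nonneg hy _) hr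
  -- monotonicity
  obtain ⟨hA1, _⟩ := lemL (by linarith : (-1:ℝ) < p - 2) hδ hr htr
  obtain ⟨hB1, _⟩ := lemL (by linarith : (-1:ℝ) < (p-2)/2) hδ hr htr
  have hmgA : 0 ≤ min 1 (1+(p-2)) * ((δ+t) ^ (p-2) * (t-r)) := by
    apply mul_nonneg (le_min zero_le_one (by linarith))
    exact mul_nonneg (Real.rpow_nonneg hx _) (by linarith)
  have hmgB : 0 ≤ min 1 (1+(p-2)/2) * ((δ+t) ^ ((p-2)/2) * (t-r)) := by
    apply mul_nonneg (le_min zero_le_one (by linarith))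
    exact mul_nonneg (Real.rpow_nonneg hx _) (by linarith)
  have hmonog : (δ+r) ^ (p-2) * r ≤ (δ+t) ^ (p-2) * t := by linarith
  have hmonof : (δ+r) ^ ((p-2)/2) * r ≤ (δ+t) ^ ((p-2)/2) * t := by linarith
  -- key identity : t * g t = (f t)^2
  have hid : ((δ+t) ^ ((p-2)/2) * t)^2 = ((δ+t) ^ (p-2) * t) * t := by
    rw [mul_pow, sq_rpow_half (δ+t) (p-2) hx]
    ring
  constructor
  · nlinarith [hid, mul_nonneg hgt hr, mul_nonneg hgr ht, mul_nonneg hgr hr,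
      mul_nonneg (sub_nonneg.2 hmonof) (by linarith : (0:ℝ) ≤ 3*((δ+t) ^ ((p-2)/2) * t) + (δ+r) ^ ((p-2)/2) * r)]
  · have hstep : (t+r) * ((δ+t) ^ (p-2) * t + (δ+r) ^ (p-2) * r) ≤ (2*t) * (2*((δ+t) ^ (p-2) * t)) := by
      apply mul_le_mul (by linarith) (by linarith) (by linarith) (by linarith)
    nlinarith [hid, hstep, mul_nonneg hfr (by linarith : (0:ℝ) ≤ 2*((δ+t) ^ ((p-2)/2) * t) + (δ+r) ^ ((p-2)/2) * r)]

lemma affine_nonpos {K B s M : ℝ} (hs : |s| ≤ M) (h1 : K*M + B ≤ 0) (h2 : K*(-M) + B ≤ 0) :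
    K*s + B ≤ 0 := by
  obtain ⟨hl, hu⟩ := abs_le.mp hs
  rcases le_total 0 K with hK | hK
  · nlinarith
  · nlinarith

set_option maxHeartbeats 1000000 in
theorem stmt3 (d : ℕ) (p δ : ℝ) (hp : 1 < p) (hδ : 0 ≤ δ) :
    ∃ c > (0:ℝ), ∃ C > (0:ℝ), ∀ a b : EuclideanSpace ℝ (Fin d),
      c * ‖(δ + ‖a‖) ^ ((p - 2) / 2) • a - (δ + ‖b‖) ^ ((p - 2) / 2) • b‖ ^ 2 ≤
        (inner ℝ ((δ + ‖a‖) ^ (p - 2) • a - (δ + ‖b‖) ^ (p - 2) • b) (a - b) : ℝ) ∧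
      (inner ℝ ((δ + ‖a‖) ^ (p - 2) • a - (δ + ‖b‖) ^ (p - 2) • b) (a - b) : ℝ) ≤
        C * ‖(δ + ‖a‖) ^ ((p - 2) / 2) • a - (δ + ‖b‖) ^ ((p - 2) / 2) • b‖ ^ 2 := by
  have hca : (0:ℝ) < min 1 (p-1) := lt_min one_pos (by linarith)
  have hcb : (0:ℝ) < min 1 (p/2) := lt_min one_pos (by linarith)
  refine ⟨min (min 1 (p-1) / (max 1 (p/2))^2) (1/4), ?_,
    max (max 1 (p-1) / (min 1 (p/2))^2) 4, ?_, ?_⟩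
  · apply lt_min _ (by norm_num)
    apply div_pos hca
    have : (0:ℝ) < max 1 (p/2) := lt_of_lt_of_le one_pos (le_max_left _ _)
    positivity
  · exact lt_of_lt_of_le (by norm_num) (le_max_right _ _)
  intro a b
  set c := min (min 1 (p-1) / (max 1 (p/2))^2) (1/4) with hc
  set C := max (max 1 (p-1) / (min 1 (p/2))^2) 4 with hC
  set t := ‖a‖ with htdef
  set r := ‖b‖ with hrdef
  have ht : 0 ≤ t := norm_nonneg a
  have hr : 0 ≤ r := norm_nonneg b
  set A := (δ + t) ^ ((p-2)/2) with hA
  set B := (δ + r) ^ ((p-2)/2) with hB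
  have hA0 : 0 ≤ A := Real.rpow_nonneg (by linarith) _
  have hB0 : 0 ≤ B := Real.rpow_nonneg (by linarith) _
  have hα : (δ + t) ^ (p-2) = A^2 := (sq_rpow_half _ _ (by linarith)).symm
  have hβ : (δ + r) ^ (p-2) = B^2 := (sq_rpow_half _ _ (by linarith)).symm
  set s := (inner ℝ a b : ℝ) with hs
  have hsabs : |s| ≤ t * r := abs_real_inner_le_norm a b
  -- identities
  have hD : (inner ℝ ((δ + t) ^ (p - 2) • a - (δ + r) ^ (p - 2) • b) (a - b) : ℝ)
      = A^2*t^2 + B^2*r^2 - (A^2+B^2)*s := by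
    rw [hα, hβ]
    simp only [inner_sub_left, inner_sub_right, real_inner_smul_left,
      real_inner_self_eq_norm_sq]
    have hba : (inner ℝ b a : ℝ) = s := by rw [hs]; exact real_inner_comm a b
    have hab : (inner ℝ a b : ℝ) = s := hs.symm
    rw [hba, hab]
    ring
  have hG : ‖A • a - B • b‖ ^ 2 = A^2*t^2 + B^2*r^2 - 2*(A*B)*s := by
    rw [norm_sub_sq_real, norm_smul, norm_smul, real_inner_smul_left, real_inner_smul_right]
    have hab : (inner ℝ a b : ℝ) = s := hs.symm
    simp only [Real.norm_eq_abs, abs_of_nonneg hA0, abs_of_nonneg hB0, hab]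
    ring
  -- endpoint inequalities (symmetric in the two points)
  have hK : min 1 (p-1) / (max 1 (p/2))^2 * (A*t - B*r)^2 ≤ (t-r)*(A^2*t - B^2*r)
      ∧ (t-r)*(A^2*t - B^2*r) ≤ max 1 (p-1) / (min 1 (p/2))^2 * (A*t - B*r)^2
      ∧ (1/4:ℝ) * (A*t + B*r)^2 ≤ (t+r)*(A^2*t + B^2*r)
      ∧ (t+r)*(A^2*t + B^2*r) ≤ 4 * (A*t + B*r)^2 := by
    rcases le_total r t with h | h
    · obtain ⟨k1, k2⟩ := scalarE1 hp hδ hr h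
      obtain ⟨k3, k4⟩ := scalarE2 hp hδ hr h
      rw [hα, hβ] at k1 k2 k3 k4
      rw [← hA, ← hB] at k1 k2 k3 k4
      exact ⟨k1, k2, k3, k4⟩
    · obtain ⟨k1, k2⟩ := scalarE1 hp hδ ht h
      obtain ⟨k3, k4⟩ := scalarE2 hp hδ ht h
      rw [hα, hβ] at k1 k2 k3 k4
      rw [← hA, ← hB] at k1 k2 k3 k4
      refine ⟨by linarith [k1], by linarith [k2], by linarith [k3], by linarith [k4]⟩
  obtain ⟨k1, k2, k3, k4⟩ := hK
  have hcle1 : c ≤ min 1 (p-1) / (max 1 (p/2))^2 := min_le_left _ _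
  have hcle2 : c ≤ 1/4 := min_le_right _ _
  have hCge1 : max 1 (p-1) / (min 1 (p/2))^2 ≤ C := le_max_left _ _
  have hCge2 : (4:ℝ) ≤ C := le_max_right _ _
  clear_value c C t r A B s
  rw [hD, hG]
  constructor
  · -- c * G ≤ D
    have h1 : ((A^2+B^2) - 2*c*(A*B))*(t*r) + (c-1)*(A^2*t^2 + B^2*r^2) ≤ 0 := by
      nlinarith [k1, mul_nonneg (sub_nonneg.2 hcle1) (sq_nonneg (A*t - B*r))]
    have h2 : ((A^2+B^2) - 2*c*(A*B))*(-(t*r)) + (c-1)*(A^2*t^2 + B^2*r^2) ≤ 0 := by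
      nlinarith [k3, mul_nonneg (sub_nonneg.2 hcle2) (sq_nonneg (A*t + B*r))]
    have := affine_nonpos hsabs h1 h2
    nlinarith [this]
  · -- D ≤ C * G
    have h1 : (2*C*(A*B) - (A^2+B^2))*(t*r) + (1-C)*(A^2*t^2 + B^2*r^2) ≤ 0 := by
      nlinarith [k2, mul_nonneg (sub_nonneg.2 hCge1) (sq_nonneg (A*t - B*r))]
    have h2 : (2*C*(A*B) - (A^2+B^2))*(-(t*r)) + (1-C)*(A^2*t^2 + B^2*r^2) ≤ 0 := by
      nlinarith [k4, mul_nonneg (sub_nonneg.2 hCge2) (sq_nonneg (A*t + B*r))]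
    have := affine_nonpos hsabs h1 h2
    nlinarith [this]
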